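/- Let G be a group, P a submonoid of G, and for p ∈ P let L_p be the isometry of ℓ²(P) determined by L_p δ_q = δ_{pq}. Let α = (p₁, p₂, …, p_{2k}) be an even-length word of elements of P (k ≥ 1). If the constructible right ideal K(α) is empty, then L_{p₁}(L_{p₂})† L_{p₃}(L_{p₄})† ⋯ L_{p_{2k-1}}(L_{p_{2k}})† = 0 as an operator on ℓ²(P). -/

import Mathlib

/-- The iterated right quotient `\mathring{α} = p₁p₂⁻¹p₃p₄⁻¹⋯p_{2k-1}p_{2k}⁻¹` of the
even-length word `α = (p 1, p 2, …, p (2k))` (indices are `1`-based). -/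
def wordQuotient {G : Type*} [Group G] (p : ℕ → G) (k : ℕ) : G :=
  ((List.range k).map fun i => p (2 * i + 1) * (p (2 * i + 2))⁻¹).prod

/-- The element `g_j = p_{2k}p_{2k-1}⁻¹p_{2k-2}p_{2k-3}⁻¹⋯p_{2j+2}p_{2j+1}⁻¹p_{2j}`
(for `1 ≤ j ≤ k`), so that `g_k = p_{2k}`. -/
def wordG {G : Type*} [Group G] (p : ℕ → G) (k j : ℕ) : G :=
  ((List.range (k - j)).map fun i => p (2 * k - 2 * i) * (p (2 * k - 2 * i - 1))⁻¹).prod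
    * p (2 * j)

/-- The constructible right ideal `K(α) = ⋂_{j=1}^{k} g_j P` of the word
`α = (p 1, …, p (2k))`. -/
def wordK {G : Type*} [Group G] (P : Submonoid G) (p : ℕ → G) (k : ℕ) : Set G :=
  {x : G | ∀ j : ℕ, 1 ≤ j → j ≤ k → ∃ q ∈ P, x = wordG p k j * q}

/-- The operator `L_α = L_{p₁}(L_{p₂})† L_{p₃}(L_{p₄})† ⋯ L_{p_{2k-1}}(L_{p_{2k}})†` on
`ℓ²(P)` associated to the even-length word `α = (w 1, …, w (2k))` of elements of `P`. -/
noncomputable def wordOp {G : Type*} [Group G] (P : Submonoid G)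
    (L : P → (lp (fun _ : P => ℂ) 2 →L[ℂ] lp (fun _ : P => ℂ) 2)) (w : ℕ → P) (k : ℕ) :
    lp (fun _ : P => ℂ) 2 →L[ℂ] lp (fun _ : P => ℂ) 2 :=
  ((List.range k).map fun i =>
    L (w (2 * i + 1)) * ContinuousLinearMap.adjoint (L (w (2 * i + 2)))).prod

section Aux

variable {G : Type*} [Group G] [DecidableEq G] (P : Submonoid G)
variable (L : P → (lp (fun _ : P => ℂ) 2 →L[ℂ] lp (fun _ : P => ℂ) 2))
variable (hL : ∀ p q : P, L p (lp.single 2 q 1) = lp.single 2 (p * q) 1)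

open scoped InnerProductSpace

lemma coord_eq (x : lp (fun _ : P => ℂ) 2) (r : P) :
    ⟪lp.single 2 r (1 : ℂ), x⟫_ℂ = x r := by
  rw [lp.inner_single_left]
  simp

include hL in
lemma adj_apply_single (p q r : P) :
    (ContinuousLinearMap.adjoint (L p) (lp.single 2 q 1)) r
      = if q = p * r then 1 else 0 := by
  rw [← coord_eq, ContinuousLinearMap.adjoint_inner_right, hL, lp.inner_single_left,
    lp.single_apply]
  by_cases h : q = p * r
  · simp [h]
  · rw [Pi.single_apply, if_neg (show ¬ (p * r = q) from fun hc => h hc.symm)]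
    simp [h]

include hL in
lemma adj_single_mul (p r : P) :
    ContinuousLinearMap.adjoint (L p) (lp.single 2 (p * r) 1) = lp.single 2 r 1 := by
  apply lp.ext
  funext s
  rw [adj_apply_single P L hL p (p * r) s, lp.single_apply]
  by_cases h : s = r
  · subst h; simp
  · rw [if_neg, Pi.single_apply, if_neg h]
    intro hc
    apply h
    have hc' : (p : G) * s = (p : G) * r := by
      have := congrArg (Subtype.val) hc
      push_cast at this
      rw [this]
    exact Subtype.ext (mul_left_cancel hc')

include hL in
lemma adj_single_not (p q : P) (h : ∀ r : P, q ≠ p * r) :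
    ContinuousLinearMap.adjoint (L p) (lp.single 2 q 1) = 0 := by
  apply lp.ext
  funext s
  rw [adj_apply_single P L hL p q s, if_neg (h s)]
  rfl

lemma wordG_succ (p : ℕ → G) (k j : ℕ) (hjk : j ≤ k) :
    wordG p (k + 1) j = p (2 * k + 2) * (p (2 * k + 1))⁻¹ * wordG p k j := by
  unfold wordG
  have h : k + 1 - j = (k - j) + 1 := by omega
  rw [h, List.range_succ_eq_map, List.map_cons, List.prod_cons, List.map_map]
  have heq : ((fun i => p (2 * (k + 1) - 2 * i) * (p (2 * (k + 1) - 2 * i - 1))⁻¹) ∘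
        (· + 1)) = fun i => p (2 * k - 2 * i) * (p (2 * k - 2 * i - 1))⁻¹ := by
    funext i
    have h1 : 2 * (k + 1) - 2 * (i + 1) = 2 * k - 2 * i := by omega
    have h2 : 2 * (k + 1) - 2 * (i + 1) - 1 = 2 * k - 2 * i - 1 := by omega
    simp only [Function.comp_apply, h1, h2]
  rw [heq]
  have h3 : 2 * (k + 1) - 2 * 0 = 2 * k + 2 := by omega
  rw [h3]
  have h4 : 2 * k + 2 - 1 = 2 * k + 1 := by omega
  rw [h4, mul_assoc]

lemma wordG_last (p : ℕ → G) (k : ℕ) : wordG p (k + 1) (k + 1) = p (2 * (k + 1)) := by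
  unfold wordG
  simp

include hL in
lemma vanish (w : ℕ → P) :
    ∀ k : ℕ, ∀ q : P,
      (∃ j : ℕ, 1 ≤ j ∧ j ≤ k ∧
        ¬∃ s ∈ P, (q : G) = wordG (fun i => (w i : G)) k j * s) →
      wordOp P L w k (lp.single 2 q 1) = 0 := by
  intro k
  induction k with
  | zero => rintro q ⟨j, hj1, hj0, _⟩; omega
  | succ k ih =>
    rintro q ⟨j, hj1, hjk, hjno⟩
    have hsplit : wordOp P L w (k + 1) = wordOp P L w k *
        (L (w (2 * k + 1)) * ContinuousLinearMap.adjoint (L (w (2 * k + 2)))) := by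
      unfold wordOp
      rw [List.range_succ, List.map_append, List.prod_append]
      simp [mul_assoc]
    rw [hsplit, ContinuousLinearMap.mul_apply, ContinuousLinearMap.mul_apply]
    by_cases hq : ∃ r : P, q = w (2 * k + 2) * r
    · obtain ⟨r, rfl⟩ := hq
      rw [adj_single_mul P L hL, hL]
      rcases Nat.lt_or_ge j (k + 1) with hjlt | hjge
      · apply ih
        refine ⟨j, hj1, by omega, ?_⟩
        rintro ⟨s, hs, heq⟩
        apply hjno
        refine ⟨s, hs, ?_⟩
        rw [wordG_succ _ _ _ (by omega)]
        push_cast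
        push_cast at heq
        rw [mul_assoc, mul_assoc, ← heq]
        group
      · exfalso
        apply hjno
        have hj : j = k + 1 := by omega
        subst hj
        refine ⟨(r : G), r.2, ?_⟩
        rw [wordG_last]
        have h2 : 2 * (k + 1) = 2 * k + 2 := by ring
        rw [h2]
        push_cast
        rfl
    · rw [adj_single_not P L hL _ _ (fun r hr => hq ⟨r, hr⟩)]
      simp

end Aux

set_option synthInstance.maxHeartbeats 1000000 in
theorem stmt_6 {G : Type*} [Group G] [DecidableEq G] (P : Submonoid G)
    (L : P → (lp (fun _ : P => ℂ) 2 →L[ℂ] lp (fun _ : P => ℂ) 2))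
    (hL : ∀ p q : P, L p (lp.single 2 q 1) = lp.single 2 (p * q) 1)
    (k : ℕ) (hk : 1 ≤ k) (w : ℕ → P)
    (hempty : wordK P (fun i => (w i : G)) k = ∅) :
    wordOp P L w k = 0 := by
  have hvan : ∀ q : P, wordOp P L w k (lp.single 2 q 1) = 0 := by
    intro q
    apply vanish P L hL w k q
    have h := Set.eq_empty_iff_forall_notMem.mp hempty (q : G)
    simp only [wordK, Set.mem_setOf_eq] at h
    push_neg at h
    obtain ⟨j, hj1, hjk, hno⟩ := h
    exact ⟨j, hj1, hjk, fun ⟨s, hs, heq⟩ => hno s hs heq⟩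
  apply ContinuousLinearMap.ext
  intro x
  rw [ContinuousLinearMap.zero_apply]
  have hx : HasSum (fun q : P => lp.single 2 q (x q)) x :=
    lp.hasSum_single ENNReal.ofNat_ne_top x
  have h0 : HasSum (fun q : P => wordOp P L w k (lp.single 2 q (x q)))
      (wordOp P L w k x) := hx.mapL _
  have hz : ∀ q : P, wordOp P L w k (lp.single 2 q (x q)) = 0 := by
    intro q
    have hsingle : lp.single 2 q (x q) = x q • lp.single (E := fun _ : P => ℂ) 2 q (1 : ℂ) := by
      have h := lp.single_smul (E := fun _ : P => ℂ) 2 q (x q) (1 : ℂ)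
      rw [← h, smul_eq_mul, mul_one]
    rw [hsingle, map_smul, hvan, smul_zero]
  simp only [hz] at h0
  simpa using h0.unique hasSum_zero
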